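/- Let G = (V, E) be a connected graph, let v ∈ V, and let ℓ be a positive integer. Let G^{≤3} denote the graph on V where u and w are adjacent iff there is a path in G from u to w of length at most 3. Let n_{G,ℓ}(v) denote the number of connected induced subgraphs of G of size ℓ containing v. Then for ℓ' = min{3ℓ, |V|}, we have n_{G^{≤3}, ℓ}(v) ≤ 2^{ℓ'} · n_{G, ℓ'}(v). -/

import Mathlib

open scoped Classical

/-- The graph `G^{≤3}`: vertices of `G`, with `u ∼ w` iff there is a path in `G` from `u`
to `w` of (positive) length at most `3`. -/
def distLE3 {V : Type*} (G : SimpleGraph V) : SimpleGraph V where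
  Adj u w := u ≠ w ∧ G.Reachable u w ∧ G.dist u w ≤ 3
  symm := ⟨by
    rintro u w ⟨h1, h2, h3⟩
    exact ⟨h1.symm, h2.symm, by rwa [SimpleGraph.dist_comm]⟩⟩
  loopless := ⟨fun u h => h.1 rfl⟩

/-- `nConn G ℓ v` is the number of connected induced subgraphs of `G` of size `ℓ`
containing `v`. -/
noncomputable def nConn {V : Type*} [Fintype V] (G : SimpleGraph V) (ℓ : ℕ) (v : V) : ℕ :=
  {T : Finset V | T.card = ℓ ∧ v ∈ T ∧ (G.induce (T : Set V)).Connected}.ncard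

namespace NConnAux

variable {V : Type*}

/-- Connectivity of a finset via walks from a base vertex. -/
def Conn (Γ : SimpleGraph V) (s : Finset V) (v : V) : Prop :=
  ∀ x ∈ s, ∃ p : Γ.Walk v x, ∀ y ∈ p.support, y ∈ s

lemma conn_of_connected {Γ : SimpleGraph V} {s : Finset V} {v : V}
    (hv : v ∈ s) (h : (Γ.induce (s : Set V)).Connected) : Conn Γ s v := by
  intro x hx
  obtain ⟨p⟩ := h.preconnected ⟨v, hv⟩ ⟨x, hx⟩
  refine ⟨(p.map (SimpleGraph.Embedding.induce (s : Set V)).toHom), ?_⟩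
  intro y hy
  have key : ∀ z ∈ (p.map (SimpleGraph.Embedding.induce (s : Set V)).toHom).support, z ∈ s := by
    intro z hz
    rw [SimpleGraph.Walk.support_map] at hz
    obtain ⟨⟨w, hw⟩, _, rfl⟩ := List.mem_map.mp hz
    exact hw
  exact key y hy

lemma reach_induce {Γ : SimpleGraph V} {s : Finset V} :
    ∀ {a b : V} (p : Γ.Walk a b), (∀ y ∈ p.support, y ∈ s) →
      ∀ (ha : a ∈ s) (hb : b ∈ s),
      (Γ.induce (s : Set V)).Reachable ⟨a, ha⟩ ⟨b, hb⟩ := by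
  intro a b p
  induction p with
  | nil => intro _ ha hb; rfl
  | @cons u w x h p ih =>
    intro hsup ha hb
    have hw : w ∈ s := hsup w (by simp)
    have : (Γ.induce (s : Set V)).Adj ⟨u, ha⟩ ⟨w, hw⟩ := h
    exact (this.reachable).trans (ih (fun y hy => hsup y (by simp [hy])) hw hb)

lemma connected_of_conn {Γ : SimpleGraph V} {s : Finset V} {v : V}
    (hv : v ∈ s) (h : Conn Γ s v) : (Γ.induce (s : Set V)).Connected := by
  rw [SimpleGraph.connected_iff]
  refine ⟨fun x y => ?_, ⟨⟨v, hv⟩⟩⟩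
  obtain ⟨x, hx⟩ := x
  obtain ⟨y, hy⟩ := y
  obtain ⟨p, hp⟩ := h x hx
  obtain ⟨q, hq⟩ := h y hy
  exact (reach_induce p hp hv hx).symm.trans (reach_induce q hq hv hy)

/-- A walk from inside `S` to outside `S` contains a crossing edge. -/
lemma walk_cross {Γ : SimpleGraph V} {S : Finset V} :
    ∀ {x y : V} (p : Γ.Walk x y), x ∈ S → y ∉ S →
      ∃ a ∈ S, ∃ b ∈ p.support, b ∉ S ∧ Γ.Adj a b := by
  intro x y p
  induction p with
  | nil => intro hx hy; exact absurd hx hy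
  | @cons u w z h p ih =>
    intro hx hy
    by_cases hw : w ∈ S
    · obtain ⟨a, ha, b, hb, hbS, hab⟩ := ih hw hy
      exact ⟨a, ha, b, by simp [hb], hbS, hab⟩
    · exact ⟨u, hx, w, by simp, hw, h⟩

lemma crossing {Γ : SimpleGraph V} {T S : Finset V} {v : V}
    (hT : Conn Γ T v) (hv : v ∈ S) (hne : ∃ y ∈ T, y ∉ S) :
    ∃ a ∈ S, ∃ b ∈ T, b ∉ S ∧ Γ.Adj a b := by
  obtain ⟨y, hyT, hyS⟩ := hne
  obtain ⟨p, hp⟩ := hT y hyT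
  obtain ⟨a, ha, b, hb, hbS, hab⟩ := walk_cross p hv hyS
  exact ⟨a, ha, b, hp b hb, hbS, hab⟩

section
variable [DecidableEq V]

/-- Adding a vertex adjacent to some vertex of a `Conn` set stays `Conn`. -/
lemma conn_insert {Γ : SimpleGraph V} {H : Finset V} {v a b : V}
    (hH : Conn Γ H v) (ha : a ∈ H) (hab : Γ.Adj a b) : Conn Γ (insert b H) v := by
  intro x hx
  rcases Finset.mem_insert.mp hx with rfl | hx
  · obtain ⟨p, hp⟩ := hH a ha
    refine ⟨p.concat hab, fun y hy => ?_⟩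
    rw [SimpleGraph.Walk.support_concat] at hy
    rw [List.mem_append] at hy
    rcases hy with h | h
    · exact Finset.mem_insert_of_mem (hp y h)
    · simp at h; simp [h]
  · obtain ⟨p, hp⟩ := hH x hx
    exact ⟨p, fun y hy => Finset.mem_insert_of_mem (hp y hy)⟩

/-- Attaching a walk `q : a → b` with `a ∈ H` keeps `Conn`. -/
lemma conn_union_walk {Γ : SimpleGraph V} {H : Finset V} {v a b : V}
    (hH : Conn Γ H v) (ha : a ∈ H) (q : Γ.Walk a b) :
    Conn Γ (H ∪ q.support.toFinset) v := by
  intro x hx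
  rcases Finset.mem_union.mp hx with hx | hx
  · obtain ⟨p, hp⟩ := hH x hx
    exact ⟨p, fun y hy => Finset.mem_union_left _ (hp y hy)⟩
  · rw [List.mem_toFinset] at hx
    obtain ⟨p, hp⟩ := hH a ha
    refine ⟨p.append (q.takeUntil x hx), fun y hy => ?_⟩
    rw [SimpleGraph.Walk.support_append] at hy
    rcases List.mem_append.mp hy with h | h
    · exact Finset.mem_union_left _ (hp y h)
    · refine Finset.mem_union_right _ (List.mem_toFinset.mpr ?_)
      exact q.support_takeUntil_subset hx (List.mem_of_mem_tail h)

variable [Fintype V]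

/-- Grow a `Conn` set by `k` vertices, using connectivity of the ambient graph. -/
lemma conn_grow {Γ : SimpleGraph V} (hΓ : Γ.Connected) {v : V} :
    ∀ (k : ℕ) (H : Finset V), Conn Γ H v → v ∈ H → H.card + k ≤ Fintype.card V →
      ∃ H', H ⊆ H' ∧ H'.card = H.card + k ∧ Conn Γ H' v := by
  intro k
  induction k with
  | zero => intro H hH _ _; exact ⟨H, Finset.Subset.refl H, rfl, hH⟩
  | succ k ih =>
    intro H hH hv hcard
    have huniv : Conn Γ Finset.univ v := by
      intro x _
      obtain ⟨p⟩ := hΓ.preconnected v x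
      exact ⟨p, fun y _ => Finset.mem_univ y⟩
    have hne : ∃ y ∈ (Finset.univ : Finset V), y ∉ H := by
      by_contra h
      push_neg at h
      have : (Finset.univ : Finset V) ⊆ H := fun y hy => h y hy
      have := Finset.card_le_card this
      simp only [Finset.card_univ] at this
      omega
    obtain ⟨a, ha, b, _, hbH, hab⟩ := crossing huniv hv hne
    have hcard' : (insert b H).card = H.card + 1 := Finset.card_insert_of_notMem hbH
    obtain ⟨H', hsub, hcardH', hH'⟩ := ih (insert b H) (conn_insert hH ha hab)
      (Finset.mem_insert_of_mem hv) (by omega)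
    exact ⟨H', (Finset.subset_insert b H).trans hsub, by omega, hH'⟩

/-- Core covering lemma: a set of size `m` connected in `G^{≤3}` sits inside a set of
size at most `3m - 2` connected in `G`. -/
lemma cover {G : SimpleGraph V} {T : Finset V} {v : V}
    (hT : Conn (distLE3 G) T v) (hv : v ∈ T) :
    ∀ m : ℕ, 1 ≤ m → m ≤ T.card →
      ∃ S H : Finset V, S ⊆ T ∧ v ∈ S ∧ S.card = m ∧ S ⊆ H ∧ Conn G H v ∧
        H.card + 2 ≤ 3 * m := by
  intro m
  induction m with
  | zero => omega
  | succ m ih =>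
    intro _ hm
    rcases Nat.eq_zero_or_pos m with rfl | hm1
    · refine ⟨{v}, {v}, Finset.singleton_subset_iff.mpr hv, Finset.mem_singleton_self v,
        Finset.card_singleton v, Finset.Subset.refl _, ?_, by simp⟩
      intro x hx
      rw [Finset.mem_singleton] at hx
      subst hx
      exact ⟨SimpleGraph.Walk.nil, by simp⟩
    obtain ⟨S, H, hST, hvS, hScard, hSH, hH, hHcard⟩ := ih hm1 (by omega)
    have hne : ∃ y ∈ T, y ∉ S := by
      by_contra h
      push_neg at h
      have : T ⊆ S := fun y hy => h y hy
      have := Finset.card_le_card this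
      omega
    obtain ⟨a, haS, b, hbT, hbS, hab⟩ := crossing hT hvS hne
    obtain ⟨q, hqlen⟩ := (show a ≠ b ∧ G.Reachable a b ∧ G.dist a b ≤ 3 from hab).2.1.exists_walk_length_eq_dist
    have hq3 : q.length ≤ 3 := hqlen ▸ (show a ≠ b ∧ G.Reachable a b ∧ G.dist a b ≤ 3 from hab).2.2
    have haH : a ∈ H := hSH haS
    refine ⟨insert b S, H ∪ q.support.toFinset, Finset.insert_subset hbT hST,
      Finset.mem_insert_of_mem hvS, by rw [Finset.card_insert_of_notMem hbS, hScard], ?_,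
      conn_union_walk hH haH q, ?_⟩
    · intro x hx
      rcases Finset.mem_insert.mp hx with rfl | hx
      · exact Finset.mem_union_right _ (List.mem_toFinset.mpr q.end_mem_support)
      · exact Finset.mem_union_left _ (hSH hx)
    · have h1 : H ∪ q.support.toFinset = H ∪ (q.support.toFinset.erase a) := by
        ext y
        simp only [Finset.mem_union, Finset.mem_erase]
        constructor
        · rintro (h | h)
          · exact Or.inl h
          · by_cases hya : y = a
            · exact Or.inl (hya ▸ haH)
            · exact Or.inr ⟨hya, h⟩
        · rintro (h | h)
          · exact Or.inl h
          · exact Or.inr h.2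
      have h2 : (q.support.toFinset.erase a).card ≤ 3 := by
        have hmem : a ∈ q.support.toFinset := List.mem_toFinset.mpr q.start_mem_support
        have := Finset.card_erase_of_mem hmem
        have h4 : q.support.toFinset.card ≤ 4 := by
          calc q.support.toFinset.card ≤ q.support.length := List.toFinset_card_le _
          _ = q.length + 1 := q.length_support
          _ ≤ 4 := by omega
        omega
      calc (H ∪ q.support.toFinset).card + 2
          = (H ∪ q.support.toFinset.erase a).card + 2 := by rw [h1]
        _ ≤ H.card + (q.support.toFinset.erase a).card + 2 := by
            have := Finset.card_union_le H (q.support.toFinset.erase a); omega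
        _ ≤ 3 * (m + 1) := by omega

/-- Main existence lemma. -/
lemma exists_superset {G : SimpleGraph V} (hG : G.Connected) {T : Finset V} {v : V} {ℓ : ℕ}
    (hT : ((distLE3 G).induce (T : Set V)).Connected) (hv : v ∈ T) (hcard : T.card = ℓ)
    (hℓ : 1 ≤ ℓ) :
    ∃ H : Finset V, T ⊆ H ∧ v ∈ H ∧ H.card = min (3 * ℓ) (Fintype.card V) ∧
      (G.induce (H : Set V)).Connected := by
  have hconn := conn_of_connected hv hT
  obtain ⟨S, H, hST, hvS, hScard, hSH, hH, hHcard⟩ :=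
    cover hconn hv ℓ hℓ (le_of_eq hcard.symm)
  have hSeqT : S = T := Finset.eq_of_subset_of_card_le hST (by omega)
  subst hSeqT
  set n := min (3 * ℓ) (Fintype.card V) with hn
  have hHV : H.card ≤ Fintype.card V := Finset.card_le_univ H
  have hHn : H.card ≤ n := le_min (by omega) hHV
  obtain ⟨H', hsub, hcardH', hH'⟩ := conn_grow hG (n - H.card) H hH (hSH hvS)
    (by omega)
  refine ⟨H', hSH.trans hsub, hsub (hSH hvS), by omega, connected_of_conn (hsub (hSH hvS)) hH'⟩

end

end NConnAux

theorem nConn_distLE3_le {V : Type*} [Fintype V] [DecidableEq V]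
    (G : SimpleGraph V) (hG : G.Connected) (v : V) (ℓ : ℕ) (hℓ : 1 ≤ ℓ) :
    nConn (distLE3 G) ℓ v ≤
      2 ^ (min (3 * ℓ) (Fintype.card V)) * nConn G (min (3 * ℓ) (Fintype.card V)) v := by
  classical
  set n := min (3 * ℓ) (Fintype.card V) with hn
  set A : Finset (Finset V) := Finset.univ.filter
    (fun T => T.card = ℓ ∧ v ∈ T ∧ ((distLE3 G).induce (T : Set V)).Connected) with hA
  set B : Finset (Finset V) := Finset.univ.filter
    (fun T => T.card = n ∧ v ∈ T ∧ (G.induce (T : Set V)).Connected) with hB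
  have hAcard : nConn (distLE3 G) ℓ v = A.card := by
    rw [nConn, ← Set.ncard_coe_finset]
    congr 1
    ext T
    simp [hA]
  have hBcard : nConn G n v = B.card := by
    rw [nConn, ← Set.ncard_coe_finset]
    congr 1
    ext T
    simp [hB]
  rw [hAcard, hBcard]
  -- choose the covering set
  have hex : ∀ T ∈ A, ∃ H : Finset V, T ⊆ H ∧ v ∈ H ∧ H.card = n ∧
      (G.induce (H : Set V)).Connected := by
    intro T hT
    rw [hA, Finset.mem_filter] at hT
    exact NConnAux.exists_superset hG hT.2.2.2 hT.2.2.1 hT.2.1 hℓ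
  choose! F hF1 hF2 hF3 hF4 using hex
  have hmaps : ∀ T ∈ A, F T ∈ B := by
    intro T hT
    rw [hB, Finset.mem_filter]
    exact ⟨Finset.mem_univ _, hF3 T hT, hF2 T hT, hF4 T hT⟩
  have := Finset.card_le_mul_card_image_of_maps_to hmaps (2 ^ n) ?_
  · exact this
  intro b hb
  rw [hB, Finset.mem_filter] at hb
  have hsub : (A.filter (fun T => F T = b)) ⊆ b.powerset := by
    intro T hT
    rw [Finset.mem_filter] at hT
    exact Finset.mem_powerset.mpr (hT.2 ▸ hF1 T hT.1)
  calc (A.filter (fun T => F T = b)).card ≤ b.powerset.card := Finset.card_le_card hsub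
    _ = 2 ^ n := by rw [Finset.card_powerset, hb.2.1]
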